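/- The function ω : SL₂(ℝ) × SL₂(ℝ) → ℝ given by ω(g,h) = (1/(2πi))(Log j(g,h·z) + Log j(h,z) − Log j(gh,z)) (for any z ∈ ℍ) is a 2-cocycle taking values in ℤ: ω(g,h) ∈ {−1, 0, 1} and ω(h,k) − ω(gh,k) + ω(g,hk) − ω(g,h) = 0 for all g,h,k ∈ SL₂(ℝ). -/

import Mathlib

open Complex

/-- The automorphy factor `j(g,z) = cz + d` for `g = (a b; c d) ∈ SL₂(ℝ)`. -/
noncomputable def jf (g : Matrix.SpecialLinearGroup (Fin 2) ℝ) (z : ℂ) : ℂ :=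
  (g.1 1 0 : ℝ) * z + (g.1 1 1 : ℝ)

/-- The Möbius action `g·z = (az+b)/(cz+d)`. -/
noncomputable def act (g : Matrix.SpecialLinearGroup (Fin 2) ℝ) (z : ℂ) : ℂ :=
  ((g.1 0 0 : ℝ) * z + (g.1 0 1 : ℝ)) / jf g z

/-- `ω(g,h) = (1/(2πi))(Log j(g,h·z) + Log j(h,z) − Log j(gh,z))`. -/
noncomputable def om (g h : Matrix.SpecialLinearGroup (Fin 2) ℝ) (z : ℂ) : ℂ :=
  (1 / (2 * Real.pi * I)) *
    (Complex.log (jf g (act h z)) + Complex.log (jf h z) - Complex.log (jf (g * h) z))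

/-- The "period" function `F(z) = Log j(g,h·z) + Log j(h,z) − Log j(gh,z)`, so that
`om g h z = F(z)/(2πi)`. -/
noncomputable def Fgh (g h : Matrix.SpecialLinearGroup (Fin 2) ℝ) (z : ℂ) : ℂ :=
  Complex.log (jf g (act h z)) + Complex.log (jf h z) - Complex.log (jf (g * h) z)

lemma act_eq (h : Matrix.SpecialLinearGroup (Fin 2) ℝ) (w : UpperHalfPlane) :
    act h ↑w = ↑(h • w) := by
  rw [UpperHalfPlane.specialLinearGroup_apply]
  simp [act, jf]

lemma im_act_pos (h : Matrix.SpecialLinearGroup (Fin 2) ℝ) {z : ℂ} (hz : 0 < z.im) :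
    0 < (act h z).im := by
  have : act h ↑(UpperHalfPlane.mk z hz) = ↑(h • UpperHalfPlane.mk z hz) := act_eq h _
  simp only [UpperHalfPlane.coe_mk] at this
  rw [this]
  exact (h • UpperHalfPlane.mk z hz).2

lemma jf_ne_zero (h : Matrix.SpecialLinearGroup (Fin 2) ℝ) {z : ℂ} (hz : 0 < z.im) :
    jf h z ≠ 0 := by
  by_cases hc : h.1 1 0 = 0
  · have hdet := h.2
    rw [Matrix.det_fin_two] at hdet
    have hd : h.1 1 1 ≠ 0 := by
      intro hd; rw [hc, hd] at hdet; simp at hdet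
    simp [jf, hc, hd]
  · intro H
    have := congrArg Complex.im H
    simp [jf] at this
    rcases this with h1 | h2
    · exact hc h1
    · exact absurd h2 hz.ne'

lemma jf_cocycle (g h : Matrix.SpecialLinearGroup (Fin 2) ℝ) {z : ℂ} (hz : 0 < z.im) :
    jf (g * h) z = jf g (act h z) * jf h z := by
  have hb := jf_ne_zero h hz
  have hrw : jf g (act h z) =
      ((g.1 1 0 : ℝ) * ((h.1 0 0 : ℝ) * z + (h.1 0 1 : ℝ)) + (g.1 1 1 : ℝ) * jf h z) / jf h z := by
    rw [jf, act]
    field_simp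
  rw [hrw, div_mul_cancel₀ _ hb]
  simp only [jf, Matrix.SpecialLinearGroup.coe_mul, Matrix.mul_apply, Fin.sum_univ_two]
  push_cast
  ring

lemma act_mul (h k : Matrix.SpecialLinearGroup (Fin 2) ℝ) {z : ℂ} (hz : 0 < z.im) :
    act (h * k) z = act h (act k z) := by
  have e1 : act (h * k) ↑(UpperHalfPlane.mk z hz) = ↑((h * k) • UpperHalfPlane.mk z hz) :=
    act_eq _ _
  have e2 : act k ↑(UpperHalfPlane.mk z hz) = ↑(k • UpperHalfPlane.mk z hz) := act_eq _ _
  simp only [UpperHalfPlane.coe_mk] at e1 e2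
  rw [e1, e2, mul_smul, ← act_eq]

lemma Fgh_int (g h : Matrix.SpecialLinearGroup (Fin 2) ℝ) {z : ℂ} (hz : 0 < z.im) :
    ∃ n : ℤ, -1 ≤ n ∧ n ≤ 1 ∧ Fgh g h z = n * (2 * Real.pi * I) := by
  have ha : jf g (act h z) ≠ 0 := jf_ne_zero g (im_act_pos h hz)
  have hb : jf h z ≠ 0 := jf_ne_zero h hz
  have hexp : Complex.exp (Fgh g h z) = 1 := by
    rw [Fgh, jf_cocycle g h hz, exp_sub, exp_add, exp_log ha, exp_log hb,
      exp_log (mul_ne_zero ha hb), div_self (mul_ne_zero ha hb)]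
  obtain ⟨n, hn⟩ := Complex.exp_eq_one_iff.mp hexp
  have him : arg (jf g (act h z)) + arg (jf h z) - arg (jf (g * h) z)
      = (n : ℝ) * (2 * Real.pi) := by
    have := congrArg Complex.im hn
    simpa [Fgh, Complex.log_im] using this
  have hpi := Real.pi_pos
  have b1 := neg_pi_lt_arg (jf g (act h z))
  have b2 := arg_le_pi (jf g (act h z))
  have b3 := neg_pi_lt_arg (jf h z)
  have b4 := arg_le_pi (jf h z)
  have b5 := neg_pi_lt_arg (jf (g * h) z)
  have b6 := arg_le_pi (jf (g * h) z)
  have hlo : ((-2 : ℤ) : ℝ) < (n : ℝ) := by push_cast; nlinarith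
  have hhi : ((n : ℝ)) < ((2 : ℤ) : ℝ) := by push_cast; nlinarith
  have l1 : (-2:ℤ) < n := by exact_mod_cast hlo
  have l2 : n < (2:ℤ) := by exact_mod_cast hhi
  exact ⟨n, by omega, by omega, hn⟩

lemma jf_continuous (h : Matrix.SpecialLinearGroup (Fin 2) ℝ) : Continuous (jf h) := by
  unfold jf; fun_prop

lemma log_jf_continuousOn (h : Matrix.SpecialLinearGroup (Fin 2) ℝ) :
    ContinuousOn (fun z => Complex.log (jf h z)) {z : ℂ | 0 < z.im} := by
  by_cases hc : h.1 1 0 = 0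
  · have : ∀ z : ℂ, jf h z = ((h.1 1 1 : ℝ) : ℂ) := by intro z; simp [jf, hc]
    simp only [this]
    exact continuousOn_const
  · refine ContinuousOn.clog (jf_continuous h).continuousOn ?_
    intro z hz
    rw [Complex.mem_slitPlane_iff]
    right
    simp only [jf, Complex.add_im, Complex.mul_im, Complex.ofReal_re, Complex.ofReal_im]
    simp only [Set.mem_setOf_eq] at hz
    intro H
    simp at H
    rcases H with h1 | h2
    · exact hc h1
    · exact absurd h2 hz.ne'

lemma act_continuousOn (h : Matrix.SpecialLinearGroup (Fin 2) ℝ) :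
    ContinuousOn (act h) {z : ℂ | 0 < z.im} := by
  unfold act
  exact ContinuousOn.div (by fun_prop) (jf_continuous h).continuousOn
    (fun z hz => jf_ne_zero h hz)

lemma Fgh_continuousOn (g h : Matrix.SpecialLinearGroup (Fin 2) ℝ) :
    ContinuousOn (Fgh g h) {z : ℂ | 0 < z.im} := by
  unfold Fgh
  refine ContinuousOn.sub (ContinuousOn.add ?_ (log_jf_continuousOn h))
    (log_jf_continuousOn (g*h))
  exact (log_jf_continuousOn g).comp (act_continuousOn h) (fun z hz => im_act_pos h hz)

lemma Fgh_const (g h : Matrix.SpecialLinearGroup (Fin 2) ℝ) {z w : ℂ}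
    (hz : 0 < z.im) (hw : 0 < w.im) : Fgh g h z = Fgh g h w := by
  have hconv : Convex ℝ {c : ℂ | 0 < c.im} := convex_halfSpace_im_gt 0
  set T : Set ℂ := {-(2 * Real.pi * I), 0, 2 * Real.pi * I} with hT
  haveI : Finite T := (Set.toFinite T)
  have hmaps : Set.MapsTo (Fgh g h) {c : ℂ | 0 < c.im} T := by
    intro x hx
    obtain ⟨n, h1, h2, h3⟩ := Fgh_int g h hx
    rw [h3]; interval_cases n <;> push_cast <;> simp [hT]
  exact hconv.isPreconnected.constant_of_mapsTo (Set.toFinite T).isDiscrete (Fgh_continuousOn g h) hmaps hz hw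

theorem om_integral_two_cocycle (g h k : Matrix.SpecialLinearGroup (Fin 2) ℝ)
    (z : ℂ) (hz : 0 < z.im) :
    om g h z ∈ ({-1, 0, 1} : Set ℂ) ∧
    om h k z - om (g * h) k z + om g (h * k) z - om g h z = 0 := by
  have h2pi : (2 * (Real.pi : ℂ) * I) ≠ 0 := by
    simp [Real.pi_ne_zero, I_ne_zero]
  constructor
  · obtain ⟨n, h1, h2, h3⟩ := Fgh_int g h hz
    have hom : om g h z = (n : ℂ) := by
      have : om g h z = (1 / (2 * Real.pi * I)) * Fgh g h z := rfl
      rw [this, h3]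
      field_simp
    rw [hom]
    interval_cases n <;> push_cast <;> simp
  · have hw : 0 < (act k z).im := im_act_pos k hz
    have hiden : om h k z - om (g * h) k z + om g (h * k) z - om g h z
        = (1 / (2 * Real.pi * I)) * (Fgh g h (act k z) - Fgh g h z) := by
      simp only [om, Fgh, act_mul h k hz, mul_assoc]
      ring
    rw [hiden, Fgh_const g h hw hz, sub_self, mul_zero]
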